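/- Let (a_j)_{j∈ℕ}, (b_j)_{j∈ℕ} ⊂ (0,∞) be such that lim_{N→∞} Σ_{j=1}^N log a_j exists in ℝ and Σ_{j∈ℕ} |a_j − b_j| < ∞. Then a_min := inf_{j∈ℕ} a_j > 0 and b_min := inf_{j∈ℕ} b_j > 0, the limit lim_{N→∞} ∏_{j=1}^N b_j exists in ℝ, and with C := exp(Σ_{j∈ℕ} |a_j−b_j| / a_min) · (lim_{N→∞} ∏_{j=1}^N a_j) / min{a_min, b_min} < ∞ it holds that |lim_{N→∞} ∏_{j=1}^N a_j − lim_{N→∞} ∏_{j=1}^N b_j| ≤ C Σ_{j∈ℕ} |a_j − b_j|. -/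

import Mathlib

open Filter

lemma log_sub_log_le' {x y : ℝ} (hx : 0 < x) (hy : 0 < y) :
    Real.log x - Real.log y ≤ (x - y) / y := by
  rw [← Real.log_div hx.ne' hy.ne']
  have h := Real.log_le_sub_one_of_pos (div_pos hx hy)
  have : x / y - 1 = (x - y) / y := by field_simp
  linarith

lemma abs_log_sub_log_le' {x y : ℝ} (hx : 0 < x) (hy : 0 < y) :
    |Real.log x - Real.log y| ≤ |x - y| / min x y := by
  rw [abs_le]
  constructor
  · have h := log_sub_log_le' hy hx
    have : (y - x) / x ≤ |x - y| / min x y := by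
      apply div_le_div₀ (abs_nonneg _) _ (lt_min hx hy) (min_le_left _ _)
      rw [abs_sub_comm]; exact le_abs_self _
    linarith
  · have h := log_sub_log_le' hx hy
    have : (x - y) / y ≤ |x - y| / min x y := by
      apply div_le_div₀ (abs_nonneg _) (le_abs_self _) (lt_min hx hy) (min_le_right _ _)
    linarith

lemma abs_exp_sub_exp_le' (x y : ℝ) :
    |Real.exp x - Real.exp y| ≤ max (Real.exp x) (Real.exp y) * |x - y| := by
  wlog h : y ≤ x
  · rw [abs_sub_comm, abs_sub_comm x y, max_comm]
    exact this y x (le_of_not_ge h)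
  have h1 : Real.exp y - Real.exp x ≤ 0 := by
    have := Real.exp_le_exp.2 h; linarith
  have h2 : 1 + (y - x) ≤ Real.exp (y - x) := by linarith [Real.add_one_le_exp (y - x)]
  have h3 : Real.exp x * Real.exp (y - x) = Real.exp y := by
    rw [← Real.exp_add]; ring_nf
  have h4 : Real.exp x - Real.exp y ≤ Real.exp x * (x - y) := by
    nlinarith [Real.exp_pos x]
  rw [abs_of_nonneg (by linarith), abs_of_nonneg (by linarith : (0:ℝ) ≤ x - y)]
  calc Real.exp x - Real.exp y ≤ Real.exp x * (x - y) := h4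
    _ ≤ max (Real.exp x) (Real.exp y) * (x - y) := by
        apply mul_le_mul_of_nonneg_right (le_max_left _ _) (by linarith)

lemma pos_lb_of_tendsto_one (f : ℕ → ℝ) (hf : ∀ j, 0 < f j)
    (htf : Tendsto f atTop (nhds 1)) : ∃ c > 0, ∀ j, c ≤ f j := by
  obtain ⟨N, hN⟩ := Filter.eventually_atTop.mp
    (htf.eventually (eventually_ge_nhds (by norm_num : (1:ℝ)/2 < 1)))
  refine ⟨min (1/2) ((Finset.range (N+1)).inf' ⟨0, by simp⟩ f), ?_, ?_⟩
  · apply lt_min (by norm_num)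
    refine (Finset.lt_inf'_iff _).2 ?_
    exact fun j _ => hf j
  · intro j
    rcases le_or_gt j N with hj | hj
    · exact (min_le_right _ _).trans (Finset.inf'_le _ (by simp; omega))
    · exact (min_le_left _ _).trans (hN j hj.le)

theorem stmt10 (a b : ℕ → ℝ) (ha : ∀ j, 0 < a j) (hb : ∀ j, 0 < b j)
    (hlog : ∃ l : ℝ,
      Tendsto (fun N => ∑ j ∈ Finset.range N, Real.log (a j)) atTop (nhds l))
    (hsum : Summable fun j => |a j - b j|) :
    (0 < ⨅ j, a j) ∧ (0 < ⨅ j, b j) ∧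
      ∃ Pa Pb : ℝ,
        Tendsto (fun N => ∏ j ∈ Finset.range N, a j) atTop (nhds Pa) ∧
        Tendsto (fun N => ∏ j ∈ Finset.range N, b j) atTop (nhds Pb) ∧
        |Pa - Pb| ≤
          Real.exp ((∑' j, |a j - b j|) / (⨅ j, a j)) * Pa /
              min (⨅ j, a j) (⨅ j, b j) * ∑' j, |a j - b j| := by
  obtain ⟨l, hl⟩ := hlog
  -- log a_j → 0
  have hlog0 : Tendsto (fun N => Real.log (a N)) atTop (nhds 0) := by
    have h1 := (hl.comp (tendsto_add_atTop_nat 1)).sub hl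
    simp only [sub_self] at h1
    convert h1 using 2 with N
    simp [Function.comp, Finset.sum_range_succ]
  -- a_j → 1
  have hexplog : ∀ N, Real.exp (Real.log (a N)) = a N := fun N => Real.exp_log (ha N)
  have ha1 : Tendsto a atTop (nhds 1) := by
    have h := (Real.continuous_exp.tendsto 0).comp hlog0
    simp only [Real.exp_zero] at h
    have h2 : (Real.exp ∘ fun N => Real.log (a N)) = a := funext fun N => hexplog N
    rwa [h2] at h
  -- b_j → 1
  have habs0 : Tendsto (fun j => |a j - b j|) atTop (nhds 0) := hsum.tendsto_atTop_zero
  have hd0 : Tendsto (fun j => a j - b j) atTop (nhds 0) :=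
    tendsto_zero_iff_abs_tendsto_zero _ |>.mpr habs0
  have hb1 : Tendsto b atTop (nhds 1) := by
    have h := ha1.sub hd0
    simp only [sub_sub_cancel, sub_zero] at h
    exact h
  -- positive infima
  obtain ⟨ca, hca, hca'⟩ := pos_lb_of_tendsto_one a ha ha1
  obtain ⟨cb, hcb, hcb'⟩ := pos_lb_of_tendsto_one b hb hb1
  have hia : 0 < ⨅ j, a j := lt_of_lt_of_le hca (le_ciInf hca')
  have hib : 0 < ⨅ j, b j := lt_of_lt_of_le hcb (le_ciInf hcb')
  have hbda : BddBelow (Set.range a) := ⟨ca, by rintro _ ⟨j, rfl⟩; exact hca' j⟩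
  have hbdb : BddBelow (Set.range b) := ⟨cb, by rintro _ ⟨j, rfl⟩; exact hcb' j⟩
  have hiale : ∀ j, (⨅ j, a j) ≤ a j := fun j => ciInf_le hbda j
  have hible : ∀ j, (⨅ j, b j) ≤ b j := fun j => ciInf_le hbdb j
  set ia := ⨅ j, a j with hiadef
  set ib := ⨅ j, b j with hibdef
  set m := min ia ib with hmdef
  have hm : 0 < m := lt_min hia hib
  set S := ∑' j, |a j - b j| with hSdef
  have hS0 : 0 ≤ S := tsum_nonneg fun j => abs_nonneg _
  -- summability of log a - log b
  have hkey : ∀ j, |Real.log (a j) - Real.log (b j)| ≤ |a j - b j| * m⁻¹ := by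
    intro j
    refine (abs_log_sub_log_le' (ha j) (hb j)).trans ?_
    rw [div_eq_mul_inv]
    apply mul_le_mul_of_nonneg_left _ (abs_nonneg _)
    apply inv_anti₀ hm
    exact le_min ((min_le_left _ _).trans (hiale j)) ((min_le_right _ _).trans (hible j))
  have hsum2 : Summable fun j => |a j - b j| * m⁻¹ := hsum.mul_right _
  have hlabS : Summable fun j => Real.log (a j) - Real.log (b j) :=
    Summable.of_abs (hsum2.of_nonneg_of_le (fun j => abs_nonneg _) hkey)
  set L := ∑' j, (Real.log (a j) - Real.log (b j)) with hLdef
  -- partial sums of log b converge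
  have hlb : Tendsto (fun N => ∑ j ∈ Finset.range N, Real.log (b j)) atTop (nhds (l - L)) := by
    have h := hl.sub hlabS.hasSum.tendsto_sum_nat
    convert h using 2 with N
    rw [← Finset.sum_sub_distrib]
    simp
  -- products converge
  have ea : ∀ N, Real.exp (∑ j ∈ Finset.range N, Real.log (a j)) = ∏ j ∈ Finset.range N, a j := by
    intro N; rw [Real.exp_sum]; exact Finset.prod_congr rfl fun j _ => Real.exp_log (ha j)
  have eb : ∀ N, Real.exp (∑ j ∈ Finset.range N, Real.log (b j)) = ∏ j ∈ Finset.range N, b j := by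
    intro N; rw [Real.exp_sum]; exact Finset.prod_congr rfl fun j _ => Real.exp_log (hb j)
  have prodA : Tendsto (fun N => ∏ j ∈ Finset.range N, a j) atTop (nhds (Real.exp l)) := by
    have h := (Real.continuous_exp.tendsto l).comp hl
    have h2 : (Real.exp ∘ fun N => ∑ j ∈ Finset.range N, Real.log (a j))
        = fun N => ∏ j ∈ Finset.range N, a j := funext fun N => ea N
    rwa [h2] at h
  have prodB : Tendsto (fun N => ∏ j ∈ Finset.range N, b j) atTop (nhds (Real.exp (l - L))) := by
    have h := (Real.continuous_exp.tendsto (l - L)).comp hlb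
    have h2 : (Real.exp ∘ fun N => ∑ j ∈ Finset.range N, Real.log (b j))
        = fun N => ∏ j ∈ Finset.range N, b j := funext fun N => eb N
    rwa [h2] at h
  refine ⟨hia, hib, Real.exp l, Real.exp (l - L), prodA, prodB, ?_⟩
  -- the bound
  have hLabs : |L| ≤ S / m := by
    have h1 : |L| ≤ ∑' j, |Real.log (a j) - Real.log (b j)| := by
      simpa [Real.norm_eq_abs] using
        norm_tsum_le_tsum_norm (f := fun j => Real.log (a j) - Real.log (b j))
          (by simpa [Real.norm_eq_abs] using
            hsum2.of_nonneg_of_le (fun j => abs_nonneg _) hkey)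
    have h2 : ∑' j, |Real.log (a j) - Real.log (b j)| ≤ ∑' j, |a j - b j| * m⁻¹ :=
      Summable.tsum_le_tsum hkey (hsum2.of_nonneg_of_le (fun j => abs_nonneg _) hkey) hsum2
    have h3 : ∑' j, |a j - b j| * m⁻¹ = S * m⁻¹ := tsum_mul_right
    rw [div_eq_mul_inv]
    linarith
  have hnegL : -L ≤ S / ia := by
    have h0 : -L = ∑' j, (Real.log (b j) - Real.log (a j)) := by
      rw [hLdef, ← tsum_neg]; simp
    have hsum3 : Summable fun j => |a j - b j| * ia⁻¹ := hsum.mul_right _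
    have hterm : ∀ j, Real.log (b j) - Real.log (a j) ≤ |a j - b j| * ia⁻¹ := by
      intro j
      refine (log_sub_log_le' (hb j) (ha j)).trans ?_
      rw [div_eq_mul_inv]
      have h1 : b j - a j ≤ |a j - b j| := by
        rw [abs_sub_comm]; linarith [le_abs_self (b j - a j)]
      have h2 : (a j)⁻¹ ≤ ia⁻¹ := inv_anti₀ hia (hiale j)
      calc (b j - a j) * (a j)⁻¹ ≤ |a j - b j| * (a j)⁻¹ :=
            mul_le_mul_of_nonneg_right h1 (inv_nonneg.2 (ha j).le)
        _ ≤ |a j - b j| * ia⁻¹ :=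
            mul_le_mul_of_nonneg_left h2 (abs_nonneg _)
    have h4 : ∑' j, (Real.log (b j) - Real.log (a j)) ≤ ∑' j, |a j - b j| * ia⁻¹ := by
      apply Summable.tsum_le_tsum hterm _ hsum3
      · have : Summable fun j => -(Real.log (a j) - Real.log (b j)) := hlabS.neg
        simpa using this
    rw [h0, div_eq_mul_inv]
    calc ∑' j, (Real.log (b j) - Real.log (a j)) ≤ ∑' j, |a j - b j| * ia⁻¹ := h4
      _ = S * ia⁻¹ := tsum_mul_right
  have hmax : max (Real.exp l) (Real.exp (l - L)) ≤ Real.exp (S / ia) * Real.exp l := by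
    apply max_le
    · have h1 : 1 ≤ Real.exp (S / ia) := Real.one_le_exp (div_nonneg hS0 hia.le)
      nlinarith [Real.exp_pos l]
    · rw [← Real.exp_add]
      apply Real.exp_le_exp.2
      linarith
  calc |Real.exp l - Real.exp (l - L)|
      ≤ max (Real.exp l) (Real.exp (l - L)) * |l - (l - L)| := abs_exp_sub_exp_le' _ _
    _ = max (Real.exp l) (Real.exp (l - L)) * |L| := by ring_nf
    _ ≤ (Real.exp (S / ia) * Real.exp l) * (S / m) :=
        mul_le_mul hmax hLabs (abs_nonneg _)
          (by positivity)
    _ = Real.exp (S / ia) * Real.exp l / m * S := by ring
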